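/- Let q be a power of an odd prime. For any multiplicative characters A, B, C of 𝔽_q^×, any λ₂ ∈ 𝔽_q with λ₂ ≠ 1, and any λ₁ ∈ 𝔽_q, ℙ_D^{(2)}[A; B, C·B̄; C; λ₁, λ₂] = (B·Ā)(λ₂−1)·B̄(λ₂−λ₁)·ℙ_D^{(1)}[B·C̄; B; A·B·C̄; (1−λ₁)/(λ₂−λ₁)] − A(−1)·(B·C̄)(λ₂)·B̄(λ₁) + δ(λ₂−λ₁)·Ā(λ₁−1)·J(A, C̄). (When λ₁ = λ₂ the first term on the right vanishes since B̄(0) = 0, so any convention for division by zero gives a valid statement.) -/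

import Mathlib

open Finset

/-- Jacobi sum `J(A,B) = Σ_x A(x) B(1-x)`. -/
noncomputable def jacobiSum' {F : Type} [Field F] [Fintype F] (A B : MulChar F ℂ) : ℂ :=
  ∑ x : F, A x * B (1 - x)

/-- One-variable finite-field period function `ℙ_D^{(1)}[A; B; C; λ]`. -/
noncomputable def P1 {F : Type} [Field F] [Fintype F] (A B C : MulChar F ℂ) (l : F) : ℂ :=
  ∑ y : F, A y * (C * A⁻¹) (1 - y) * B⁻¹ (1 - l * y)

/-- Two-variable finite-field Appell–Lauricella period function `ℙ_D^{(2)}`. -/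
noncomputable def P2 {F : Type} [Field F] [Fintype F] (A B₁ B₂ C : MulChar F ℂ) (l₁ l₂ : F) : ℂ :=
  ∑ y : F, A y * (C * A⁻¹) (1 - y) * B₁⁻¹ (1 - l₁ * y) * B₂⁻¹ (1 - l₂ * y)

/-- n-variable finite-field Appell–Lauricella period function `ℙ_D^{(n)}`. -/
noncomputable def PDn {F : Type} [Field F] [Fintype F] (n : ℕ) (A : MulChar F ℂ)
    (B : Fin n → MulChar F ℂ) (C : MulChar F ℂ) (l : Fin n → F) : ℂ :=
  ∑ y : F, A y * (C * A⁻¹) (1 - y) * ∏ i, (B i)⁻¹ (1 - l i * y)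

/-- Normalized two-variable Appell–Lauricella function `𝔽_D^{(2)}`. -/
noncomputable def F2 {F : Type} [Field F] [Fintype F] (A B₁ B₂ C : MulChar F ℂ) (l₁ l₂ : F) : ℂ :=
  P2 A B₁ B₂ C l₁ l₂ / jacobiSum' A (C * A⁻¹)

/-- Normalized n-variable Appell–Lauricella function `𝔽_D^{(n)}`. -/
noncomputable def FDn {F : Type} [Field F] [Fintype F] (n : ℕ) (A : MulChar F ℂ)
    (B : Fin n → MulChar F ℂ) (C : MulChar F ℂ) (l : Fin n → F) : ℂ :=
  PDn n A B C l / jacobiSum' A (C * A⁻¹)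

/-- Finite-field Gauss hypergeometric function `₂𝔽₁[A,B;C;λ] = ℙ_D^{(1)}[B;A;C;λ]/J(B,C B̄)`. -/
noncomputable def twoF1 {F : Type} [Field F] [Fintype F] (A B C : MulChar F ℂ) (l : F) : ℂ :=
  P1 B A C l / jacobiSum' B (C * B⁻¹)

open scoped Classical in
/-- `δ(x) = 1` if `x = 0`, else `0`. -/
noncomputable def deltaC {F : Type} [Field F] [Fintype F] (x : F) : ℂ :=
  if x = 0 then 1 else 0

noncomputable instance {F : Type} [Field F] [Fintype F] : Fintype (MulChar F ℂ) :=
  Fintype.ofFinite _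

/-- Character binomial coefficient `(A choose χ) = -χ(-1) J(A, χ̄)`. -/
noncomputable def charBinom {F : Type} [Field F] [Fintype F] (A χ : MulChar F ℂ) : ℂ :=
  -χ (-1) * jacobiSum' A χ⁻¹

set_option linter.unusedSectionVars false

variable {F : Type} [Field F] [Fintype F]

lemma mc_ne_zero (χ : MulChar F ℂ) {x : F} (hx : x ≠ 0) : χ x ≠ 0 := by
  have h : χ x * χ x⁻¹ = 1 := by rw [← map_mul, mul_inv_cancel₀ hx, χ.map_one]
  exact left_ne_zero_of_mul_eq_one h

lemma mc_inv (χ : MulChar F ℂ) (x : F) : χ x⁻¹ = (χ x)⁻¹ := by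
  rw [← MulChar.inv_apply', MulChar.inv_apply_eq_inv']

lemma mc_div (χ : MulChar F ℂ) (a b : F) : χ (a / b) = χ a * (χ b)⁻¹ := by
  rw [div_eq_mul_inv, map_mul, mc_inv]

lemma mc_neg_one_inv (χ : MulChar F ℂ) : (χ (-1))⁻¹ = χ (-1) := by
  have h : χ (-1) * χ (-1) = 1 := by
    rw [← map_mul]; norm_num
  exact (eq_inv_of_mul_eq_one_left h).symm

set_option maxHeartbeats 1000000 in
lemma key1 (A B C : MulChar F ℂ) (l₁ l₂ t : F) (h1 : l₂ - 1 ≠ 0) (hd : l₂ - l₁ ≠ 0)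
    (hs : t - l₂ ≠ 0) :
    A ((t-1)/(t-l₂)) * (C*A⁻¹) (1 - (t-1)/(t-l₂)) * B⁻¹ (1 - l₁*((t-1)/(t-l₂)))
      * (B*C⁻¹) (1 - l₂*((t-1)/(t-l₂)))
    = (B*A⁻¹) (l₂-1) * B⁻¹ (l₂-l₁) *
        ((B*C⁻¹) t * A (1-t) * B⁻¹ (1 - (1-l₁)/(l₂-l₁)*t)) := by
  have h1' : (1:F) - l₂ ≠ 0 := fun h => h1 (by linear_combination -h)
  set w : F := 1 - (1-l₁)/(l₂-l₁)*t with hw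
  have e2 : 1 - (t-1)/(t-l₂) = (1-l₂)/(t-l₂) := by field_simp; ring
  have e3 : 1 - l₁*((t-1)/(t-l₂)) = ((l₂-l₁) * w * -1)/(t-l₂) := by
    rw [hw]; field_simp; ring
  have e4 : 1 - l₂*((t-1)/(t-l₂)) = (t*(1-l₂))/(t-l₂) := by field_simp; ring
  have e5 : l₂ - 1 = (1-l₂) * -1 := by ring
  have e6 : (1:F) - t = (t-1) * -1 := by ring
  rw [e2, e3, e4, e5, e6]
  rcases eq_or_ne t 0 with rfl | ht0
  · simp [MulChar.map_zero]
  rcases eq_or_ne w 0 with hw0 | hw0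
  · rw [hw0]; simp [MulChar.map_zero]
  rcases eq_or_ne (t - 1) 0 with ht1 | ht1
  · rw [ht1]; simp [MulChar.map_zero]
  clear_value w
  clear hw e2 e3 e4
  have nA1 : A (-1) ≠ 0 := mc_ne_zero A (neg_ne_zero.mpr one_ne_zero)
  have nB1 : B (-1) ≠ 0 := mc_ne_zero B (neg_ne_zero.mpr one_ne_zero)
  have nC1 : C (-1) ≠ 0 := mc_ne_zero C (neg_ne_zero.mpr one_ne_zero)
  have nAs : A (t - l₂) ≠ 0 := mc_ne_zero A hs
  have nBs : B (t - l₂) ≠ 0 := mc_ne_zero B hs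
  have nCs : C (t - l₂) ≠ 0 := mc_ne_zero C hs
  have nAm : A (1 - l₂) ≠ 0 := mc_ne_zero A h1'
  have nBm : B (1 - l₂) ≠ 0 := mc_ne_zero B h1'
  have nCm : C (1 - l₂) ≠ 0 := mc_ne_zero C h1'
  have nAd : A (l₂ - l₁) ≠ 0 := mc_ne_zero A hd
  have nBd : B (l₂ - l₁) ≠ 0 := mc_ne_zero B hd
  have nCd : C (l₂ - l₁) ≠ 0 := mc_ne_zero C hd
  have nAt : A t ≠ 0 := mc_ne_zero A ht0
  have nBt : B t ≠ 0 := mc_ne_zero B ht0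
  have nCt : C t ≠ 0 := mc_ne_zero C ht0
  have nAu : A (t - 1) ≠ 0 := mc_ne_zero A ht1
  have nBu : B (t - 1) ≠ 0 := mc_ne_zero B ht1
  have nCu : C (t - 1) ≠ 0 := mc_ne_zero C ht1
  have nAw : A w ≠ 0 := mc_ne_zero A hw0
  have nBw : B w ≠ 0 := mc_ne_zero B hw0
  have nCw : C w ≠ 0 := mc_ne_zero C hw0
  simp only [mc_div, map_mul, MulChar.mul_apply, MulChar.inv_apply_eq_inv', mul_inv, inv_inv,
    mc_neg_one_inv B]
  field_simp

lemma mc_ne_zero' (χ : MulChar F ℂ) {x : F} (hx : x ≠ 0) : χ x ≠ 0 := by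
  have h : χ x * χ x⁻¹ = 1 := by rw [← map_mul, mul_inv_cancel₀ hx, χ.map_one]
  exact left_ne_zero_of_mul_eq_one h

lemma mc_inv' (χ : MulChar F ℂ) (x : F) : χ x⁻¹ = (χ x)⁻¹ := by
  rw [← MulChar.inv_apply', MulChar.inv_apply_eq_inv']

lemma mc_div' (χ : MulChar F ℂ) (a b : F) : χ (a / b) = χ a * (χ b)⁻¹ := by
  rw [div_eq_mul_inv, map_mul, mc_inv']

lemma mc_neg_one_inv' (χ : MulChar F ℂ) : (χ (-1))⁻¹ = χ (-1) := by
  have h : χ (-1) * χ (-1) = 1 := by rw [← map_mul]; norm_num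
  exact (eq_inv_of_mul_eq_one_left h).symm

set_option maxHeartbeats 1000000 in
lemma key1b (A B C : MulChar F ℂ) (l₁ l₂ : F) (h1 : l₂ - 1 ≠ 0) (hd : l₂ - l₁ ≠ 0) :
    (B*A⁻¹) (l₂-1) * B⁻¹ (l₂-l₁) *
      ((B*C⁻¹) l₂ * A (1-l₂) * B⁻¹ (1 - (1-l₁)/(l₂-l₁)*l₂))
    = A (-1) * ((B*C⁻¹) l₂ * B⁻¹ l₁) := by
  have h1' : (1:F) - l₂ ≠ 0 := fun h => h1 (by linear_combination -h)
  have e1 : 1 - (1-l₁)/(l₂-l₁)*l₂ = (l₁*(l₂-1))/(l₂-l₁) := by field_simp; ring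
  have e5 : l₂ - 1 = (1-l₂) * -1 := by ring
  rw [e1, e5]
  rcases eq_or_ne l₂ 0 with rfl | hl2
  · simp [MulChar.map_zero]
  rcases eq_or_ne l₁ 0 with rfl | hl1
  · simp [MulChar.map_zero, mc_div']
  have nA1 : A (-1) ≠ 0 := mc_ne_zero' A (neg_ne_zero.mpr one_ne_zero)
  have nB1 : B (-1) ≠ 0 := mc_ne_zero' B (neg_ne_zero.mpr one_ne_zero)
  have nAm : A (1 - l₂) ≠ 0 := mc_ne_zero' A h1'
  have nBm : B (1 - l₂) ≠ 0 := mc_ne_zero' B h1'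
  have nBd : B (l₂ - l₁) ≠ 0 := mc_ne_zero' B hd
  have nBl : B l₁ ≠ 0 := mc_ne_zero' B hl1
  have nCl2 : C l₂ ≠ 0 := mc_ne_zero' C hl2
  simp only [mc_div', map_mul, MulChar.mul_apply, MulChar.inv_apply_eq_inv', mul_inv, inv_inv,
    mc_neg_one_inv' A]
  field_simp [nA1, nB1, nAm, nBm, nBd, nBl, nCl2]
  try rw [div_eq_iff (by simp [nA1, nB1, nAm, nBm, nBd, nBl, nCl2])]
  try ring

lemma keyBB (B C : MulChar F ℂ) (z : F) : B⁻¹ z * (B*C⁻¹) z = C⁻¹ z := by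
  rcases eq_or_ne z 0 with rfl | hz
  · simp [MulChar.map_zero]
  · simp only [MulChar.mul_apply, MulChar.inv_apply_eq_inv']
    field_simp [mc_ne_zero' B hz]

set_option maxHeartbeats 1000000 in
lemma key2 (A C : MulChar F ℂ) (l x : F) (hl : l - 1 ≠ 0) (hr : x + l - 1 ≠ 0) :
    A (x/(x+l-1)) * (C*A⁻¹) (1 - x/(x+l-1)) * C⁻¹ (1 - l*(x/(x+l-1)))
    = A⁻¹ (l-1) * (A x * C⁻¹ (1-x)) := by
  have e2 : 1 - x/(x+l-1) = (l-1)/(x+l-1) := by field_simp; ring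
  have e3 : 1 - l*(x/(x+l-1)) = ((l-1)*(1-x))/(x+l-1) := by field_simp; ring
  rw [e2, e3]
  rcases eq_or_ne x 0 with rfl | hx
  · simp [MulChar.map_zero]
  rcases eq_or_ne (1-x) 0 with h1x | h1x
  · rw [h1x]; simp [MulChar.map_zero, mc_div']
  have nAl : A (l-1) ≠ 0 := mc_ne_zero' A hl
  have nCl : C (l-1) ≠ 0 := mc_ne_zero' C hl
  have nAr : A (x+l-1) ≠ 0 := mc_ne_zero' A hr
  have nCr : C (x+l-1) ≠ 0 := mc_ne_zero' C hr
  have nAx : A x ≠ 0 := mc_ne_zero' A hx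
  have nC1x : C (1-x) ≠ 0 := mc_ne_zero' C h1x
  simp only [mc_div', map_mul, MulChar.mul_apply, MulChar.inv_apply_eq_inv', mul_inv, inv_inv]
  field_simp
  try rw [div_eq_iff (by simp [nAl, nCl, nAr, nCr, nAx, nC1x])]

set_option maxHeartbeats 1000000 in
lemma key2b (A B C : MulChar F ℂ) (l : F) (hl : l - 1 ≠ 0) :
    A⁻¹ (l-1) * (A (1-l) * C⁻¹ (1 - (1-l))) = A (-1) * ((B*C⁻¹) l * B⁻¹ l) := by
  rw [show (1:F) - (1-l) = l by ring, show (1:F) - l = (l-1) * -1 by ring]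
  rcases eq_or_ne l 0 with rfl | hl0
  · simp [MulChar.map_zero]
  have nAl : A (l-1) ≠ 0 := mc_ne_zero' A hl
  have nBl : B l ≠ 0 := mc_ne_zero' B hl0
  have nCl : C l ≠ 0 := mc_ne_zero' C hl0
  simp only [map_mul, MulChar.mul_apply, MulChar.inv_apply_eq_inv', mul_inv, inv_inv]
  field_simp
  try ring


set_option maxHeartbeats 2000000 in
/-- reduction of `ℙ_D^{(2)}` when `B₂ = C B̄₁`. -/
theorem statement_16 (F : Type) [Field F] [Fintype F] (hq : Odd (Fintype.card F))
    (A B C : MulChar F ℂ) (l₁ l₂ : F) (hl₂ : l₂ ≠ 1) :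
    P2 A B (C * B⁻¹) C l₁ l₂ =
      (B * A⁻¹) (l₂ - 1) * B⁻¹ (l₂ - l₁) *
          P1 (B * C⁻¹) B (A * B * C⁻¹) ((1 - l₁) / (l₂ - l₁)) -
        A (-1) * (B * C⁻¹) l₂ * B⁻¹ l₁ +
        deltaC (l₂ - l₁) * A⁻¹ (l₁ - 1) * jacobiSum' A C⁻¹ := by
  classical
  have hE1 : (C * B⁻¹)⁻¹ = B * C⁻¹ := by rw [mul_inv, inv_inv, mul_comm]
  have hE2 : A * B * C⁻¹ * (B * C⁻¹)⁻¹ = A := by group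
  have h1 : l₂ - 1 ≠ 0 := sub_ne_zero.mpr hl₂
  have hP2 : P2 A B (C * B⁻¹) C l₁ l₂ =
      ∑ y : F, (A y * (C * A⁻¹) (1 - y) * B⁻¹ (1 - l₁ * y) * (B * C⁻¹) (1 - l₂ * y)) := by
    simp only [P2, hE1]
  rcases eq_or_ne l₁ l₂ with rfl | hne
  · -- equal case, variable named l₁
    have hd0 : l₁ - l₁ = 0 := sub_self _
    have hl : l₁ - 1 ≠ 0 := h1
    have hLHS : P2 A B (C * B⁻¹) C l₁ l₁ =
        ∑ y : F, (A y * (C * A⁻¹) (1 - y) * C⁻¹ (1 - l₁ * y)) := by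
      rw [hP2]
      refine Finset.sum_congr rfl fun y _ => ?_
      rw [mul_assoc, keyBB]
    have hg1 : A (1:F) * (C * A⁻¹) (1 - (1:F)) * C⁻¹ (1 - l₁ * 1) = 0 := by
      simp [MulChar.map_zero]
    have hful : ∑ y ∈ univ.erase (1:F), (A y * (C * A⁻¹) (1 - y) * C⁻¹ (1 - l₁ * y))
        = ∑ y : F, (A y * (C * A⁻¹) (1 - y) * C⁻¹ (1 - l₁ * y)) :=
      Finset.sum_erase _ hg1
    have hmain : ∑ x ∈ univ.erase (1 - l₁), A⁻¹ (l₁ - 1) * (A x * C⁻¹ (1 - x))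
        = ∑ y ∈ univ.erase (1:F), (A y * (C * A⁻¹) (1 - y) * C⁻¹ (1 - l₁ * y)) := by
      refine Finset.sum_nbij' (fun x => x / (x + l₁ - 1)) (fun y => y * (l₁ - 1) / (1 - y))
        ?_ ?_ ?_ ?_ ?_
      · intro x hx
        have hx' : x ≠ 1 - l₁ := (Finset.mem_erase.mp hx).1
        have hr : x + l₁ - 1 ≠ 0 := fun h => hx' (by linear_combination h)
        refine Finset.mem_erase.mpr ⟨?_, Finset.mem_univ _⟩
        intro h
        rw [div_eq_one_iff_eq hr] at h
        exact hl (by linear_combination -h)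

      · intro y hy
        have hy' : y ≠ 1 := (Finset.mem_erase.mp hy).1
        have h1y : (1:F) - y ≠ 0 := sub_ne_zero.mpr (Ne.symm hy')
        refine Finset.mem_erase.mpr ⟨?_, Finset.mem_univ _⟩
        intro h
        rw [div_eq_iff h1y] at h
        exact hl (by linear_combination h)
      · intro x hx
        have hx' : x ≠ 1 - l₁ := (Finset.mem_erase.mp hx).1
        have hr : x + l₁ - 1 ≠ 0 := fun h => hx' (by linear_combination h)
        show x / (x + l₁ - 1) * (l₁ - 1) / (1 - x / (x + l₁ - 1)) = x
        have e : (1:F) - x / (x + l₁ - 1) = (l₁ - 1) / (x + l₁ - 1) := by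
          field_simp; try ring
        rw [e, div_div_eq_mul_div, div_mul_eq_mul_div]
        field_simp
      · intro y hy
        have hy' : y ≠ 1 := (Finset.mem_erase.mp hy).1
        have h1y : (1:F) - y ≠ 0 := sub_ne_zero.mpr (Ne.symm hy')
        show y * (l₁ - 1) / (1 - y) / (y * (l₁ - 1) / (1 - y) + l₁ - 1) = y
        have e : y * (l₁ - 1) / (1 - y) + l₁ - 1 = (l₁ - 1) / (1 - y) := by
          field_simp; try ring
        rw [e, div_div_eq_mul_div, div_mul_eq_mul_div]
        field_simp
      · intro x hx
        have hx' : x ≠ 1 - l₁ := (Finset.mem_erase.mp hx).1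
        have hr : x + l₁ - 1 ≠ 0 := fun h => hx' (by linear_combination h)
        exact (key2 A C l₁ x hl hr).symm
    have hbnd : A⁻¹ (l₁ - 1) * (A (1 - l₁) * C⁻¹ (1 - (1 - l₁)))
        = A (-1) * ((B * C⁻¹) l₁ * B⁻¹ l₁) := key2b A B C l₁ hl
    have hsplit : ∑ x ∈ univ.erase (1 - l₁), A⁻¹ (l₁ - 1) * (A x * C⁻¹ (1 - x))
        = (∑ x : F, A⁻¹ (l₁ - 1) * (A x * C⁻¹ (1 - x)))
          - A⁻¹ (l₁ - 1) * (A (1 - l₁) * C⁻¹ (1 - (1 - l₁))) :=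
      Finset.sum_erase_eq_sub (Finset.mem_univ _)
    have hJ : ∑ x : F, A⁻¹ (l₁ - 1) * (A x * C⁻¹ (1 - x))
        = A⁻¹ (l₁ - 1) * jacobiSum' A C⁻¹ := by
      rw [jacobiSum', Finset.mul_sum]
    rw [hLHS, ← hful, ← hmain, hsplit, hbnd, hJ, hd0, MulChar.map_zero]
    simp [deltaC]
    try ring
  · -- unequal case
    have hd : l₂ - l₁ ≠ 0 := sub_ne_zero.mpr (Ne.symm hne)
    have hP1 : P1 (B * C⁻¹) B (A * B * C⁻¹) ((1 - l₁) / (l₂ - l₁)) =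
        ∑ t : F, ((B * C⁻¹) t * A (1 - t) * B⁻¹ (1 - (1 - l₁) / (l₂ - l₁) * t)) := by
      simp only [P1, hE2]
    have hg1 : A (1:F) * (C * A⁻¹) (1 - (1:F)) * B⁻¹ (1 - l₁ * 1) * (B * C⁻¹) (1 - l₂ * 1) = 0 := by
      simp [MulChar.map_zero]
    have hful : ∑ y ∈ univ.erase (1:F),
          (A y * (C * A⁻¹) (1 - y) * B⁻¹ (1 - l₁ * y) * (B * C⁻¹) (1 - l₂ * y))
        = ∑ y : F, (A y * (C * A⁻¹) (1 - y) * B⁻¹ (1 - l₁ * y) * (B * C⁻¹) (1 - l₂ * y)) :=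
      Finset.sum_erase _ hg1
    have hmain : ∑ t ∈ univ.erase l₂,
          (B * A⁻¹) (l₂ - 1) * B⁻¹ (l₂ - l₁) *
            ((B * C⁻¹) t * A (1 - t) * B⁻¹ (1 - (1 - l₁) / (l₂ - l₁) * t))
        = ∑ y ∈ univ.erase (1:F),
          (A y * (C * A⁻¹) (1 - y) * B⁻¹ (1 - l₁ * y) * (B * C⁻¹) (1 - l₂ * y)) := by
      refine Finset.sum_nbij' (fun t => (t - 1) / (t - l₂)) (fun y => (1 - l₂ * y) / (1 - y))
        ?_ ?_ ?_ ?_ ?_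
      · intro t ht
        have ht' : t ≠ l₂ := (Finset.mem_erase.mp ht).1
        have hs : t - l₂ ≠ 0 := sub_ne_zero.mpr ht'
        refine Finset.mem_erase.mpr ⟨?_, Finset.mem_univ _⟩
        intro h
        rw [div_eq_one_iff_eq hs] at h
        exact h1 (by linear_combination h)
      · intro y hy
        have hy' : y ≠ 1 := (Finset.mem_erase.mp hy).1
        have h1y : (1:F) - y ≠ 0 := sub_ne_zero.mpr (Ne.symm hy')
        refine Finset.mem_erase.mpr ⟨?_, Finset.mem_univ _⟩
        intro h
        rw [div_eq_iff h1y] at h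
        exact h1 (by linear_combination -h)
      · intro t ht
        have ht' : t ≠ l₂ := (Finset.mem_erase.mp ht).1
        have hs : t - l₂ ≠ 0 := sub_ne_zero.mpr ht'
        have hm : (1:F) - l₂ ≠ 0 := fun h => h1 (by linear_combination -h)
        show (1 - l₂ * ((t - 1) / (t - l₂))) / (1 - (t - 1) / (t - l₂)) = t
        have e1 : (1:F) - l₂ * ((t - 1) / (t - l₂)) = t * (1 - l₂) / (t - l₂) := by
          field_simp; try ring
        have e2 : (1:F) - (t - 1) / (t - l₂) = (1 - l₂) / (t - l₂) := by
          field_simp; try ring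
        rw [e1, e2, div_div_eq_mul_div, div_mul_eq_mul_div]
        field_simp
      · intro y hy
        have hy' : y ≠ 1 := (Finset.mem_erase.mp hy).1
        have h1y : (1:F) - y ≠ 0 := sub_ne_zero.mpr (Ne.symm hy')
        have hm : (1:F) - l₂ ≠ 0 := fun h => h1 (by linear_combination -h)
        show ((1 - l₂ * y) / (1 - y) - 1) / ((1 - l₂ * y) / (1 - y) - l₂) = y
        have e1 : (1 - l₂ * y) / (1 - y) - 1 = (1 - l₂) * y / (1 - y) := by
          field_simp; try ring
        have e2 : (1 - l₂ * y) / (1 - y) - l₂ = (1 - l₂) / (1 - y) := by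
          field_simp; try ring
        rw [e1, e2, div_div_eq_mul_div, div_mul_eq_mul_div]
        field_simp
      · intro t ht
        have ht' : t ≠ l₂ := (Finset.mem_erase.mp ht).1
        have hs : t - l₂ ≠ 0 := sub_ne_zero.mpr ht'
        exact (key1 A B C l₁ l₂ t h1 hd hs).symm
    have hb : (B * A⁻¹) (l₂ - 1) * B⁻¹ (l₂ - l₁) *
          ((B * C⁻¹) l₂ * A (1 - l₂) * B⁻¹ (1 - (1 - l₁) / (l₂ - l₁) * l₂))
        = A (-1) * ((B * C⁻¹) l₂ * B⁻¹ l₁) := key1b A B C l₁ l₂ h1 hd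
    have hsplit : ∑ t : F, (B * A⁻¹) (l₂ - 1) * B⁻¹ (l₂ - l₁) *
            ((B * C⁻¹) t * A (1 - t) * B⁻¹ (1 - (1 - l₁) / (l₂ - l₁) * t))
        = (∑ t ∈ univ.erase l₂, (B * A⁻¹) (l₂ - 1) * B⁻¹ (l₂ - l₁) *
            ((B * C⁻¹) t * A (1 - t) * B⁻¹ (1 - (1 - l₁) / (l₂ - l₁) * t)))
          + (B * A⁻¹) (l₂ - 1) * B⁻¹ (l₂ - l₁) *
            ((B * C⁻¹) l₂ * A (1 - l₂) * B⁻¹ (1 - (1 - l₁) / (l₂ - l₁) * l₂)) :=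
      (Finset.sum_erase_add _ _ (Finset.mem_univ l₂)).symm
    rw [hP2, ← hful, ← hmain, hP1, Finset.mul_sum, hsplit, hmain, hb]
    simp only [deltaC, if_neg hd]
    ring
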